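/- The following 6-partite hypergraph with 15 edges on 30 vertices is intersecting and has cover number exactly 5: vertex classes V1={a1,a3,a4,a6,a8}, V2={b1,b2,b4,b8,b12}, V3={c1,c2,c4,c7,c11}, V4={d1,d2,d3,d9,d11}, V5={e1,e2,e3,e5,e7}, V6={f1,f2,f3,f5,f7}; edges H1=(a1,b1,c1,d1,e1,f1), H2=(a1,b2,c2,d2,e2,f2), H3=(a3,b1,c2,d3,e3,f3), H4=(a4,b4,c4,d1,e2,f3), H5=(a3,b4,c1,d2,e5,f5), H6=(a6,b2,c4,d3,e5,f1), H7=(a1,b4,c7,d3,e7,f7), H8=(a8,b8,c2,d1,e5,f7), H9=(a8,b2,c1,d9,e7,f3), H10=(a3,b8,c7,d9,e2,f1), H11=(a1,b8,c11,d11,e5,f3), H12=(a8,b12,c1,d3,e2,f3), H13=(a8,b4,c2,d11,e1,f1), H14=(a4,b8,c1,d3,e2,f1), H15=(a8,b8,c1,d3,e2,f5). In particular f(6) ≤ 15. -/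

import Mathlib

/-- `E` is an `r`-partite hypergraph with vertex-class map `p`:
every edge contains exactly one vertex from each class. -/
def Rpartite {V : Type*} (r : ℕ) (p : V → Fin r) (E : Finset (Finset V)) : Prop :=
  ∀ e ∈ E, ∀ i : Fin r, ∃! v, v ∈ e ∧ p v = i

/-- Every two edges share a vertex. -/
def Intersecting {V : Type*} (E : Finset (Finset V)) : Prop :=
  ∀ e ∈ E, ∀ f ∈ E, ∃ v, v ∈ e ∧ v ∈ f

/-- `C` meets every edge of `E`. -/
def IsCover {V : Type*} (E : Finset (Finset V)) (C : Finset V) : Prop :=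
  ∀ e ∈ E, ∃ v ∈ C, v ∈ e

/-- The degree of a vertex: the number of edges containing it. -/
def degree {V : Type*} [DecidableEq V] (E : Finset (Finset V)) (v : V) : ℕ :=
  (E.filter (fun e => v ∈ e)).card

/-- There is an `r`-partite intersecting hypergraph with `m` edges and cover number `≥ r-1`. -/
def HasConfig (r m : ℕ) : Prop :=
  ∃ (V : Type) (p : V → Fin r) (E : Finset (Finset V)),
    Rpartite r p E ∧ Intersecting E ∧ E.card = m ∧
    ∀ C : Finset V, IsCover E C → r - 1 ≤ C.card

/-- `f r`: minimum number of edges of an `r`-partite intersecting hypergraph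
with cover number at least `r - 1`. -/
noncomputable def f (r : ℕ) : ℕ := sInf {m | HasConfig r m}

/-- Class map: vertices `5*i`–`5*i+4` form class `i`. The labels are:
`a1 a3 a4 a6 a8 | b1 b2 b4 b8 b12 | c1 c2 c4 c7 c11 | d1 d2 d3 d9 d11 |
 e1 e2 e3 e5 e7 | f1 f2 f3 f5 f7` as vertices `0`–`29`. -/
def p6 : Fin 30 → Fin 6 := fun v => ⟨v.val / 5, by omega⟩

def E6 : Finset (Finset (Fin 30)) :=
  { {0,5,10,15,20,25}, {0,6,11,16,21,26}, {1,5,11,17,22,27}, {2,7,12,15,21,27},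
    {1,7,10,16,23,28}, {3,6,12,17,23,25}, {0,7,13,17,24,29}, {4,8,11,15,23,29},
    {4,6,10,18,24,27}, {1,8,13,18,21,25}, {0,8,14,19,23,27}, {4,9,10,17,21,27},
    {4,7,11,19,20,25}, {2,8,10,17,21,25}, {4,8,10,17,21,28} }

/-! ### Auxiliary machinery for the cover lower bound -/

set_option maxRecDepth 10000

/-- Bitmasks: bit `j` of `msL[v]` records whether vertex `v` lies in edge `j`. -/
def msL : List ℕ := [1091, 532, 8200, 32, 22912, 5, 290, 4184, 26240, 2048,
  26897, 4230, 40, 576, 1024, 137, 18, 26724, 768, 5120,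
  4097, 27146, 4, 1200, 320, 12833, 2, 3340, 16400, 192]

def mk' (v : ℕ) : ℕ := msL.getD v 0

/-- Exhaustive search: can we reach the full mask `32767` starting from `acc`
by OR-ing in at most `k` of the masks of vertices `i, i+1, …, i+fuel-1`? -/
def chk : ℕ → ℕ → ℕ → ℕ → Bool
  | 0, _, acc, _ => acc == 32767
  | _+1, _, acc, 0 => acc == 32767
  | fuel+1, i, acc, k+1 =>
      chk fuel (i+1) (acc ||| mk' i) k || chk fuel (i+1) acc (k+1)

/-- OR of the masks of all vertices in `S`. -/
def orS (S : Finset ℕ) : ℕ := S.fold (·|||·) 0 mk'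

lemma orS_erase {S : Finset ℕ} {v : ℕ} (hv : v ∈ S) :
    orS S = mk' v ||| orS (S.erase v) := by
  conv_lhs => rw [orS, ← Finset.insert_erase hv,
    Finset.fold_insert (Finset.notMem_erase _ _)]
  rfl

lemma chk_sound : ∀ fuel i acc k, chk fuel i acc k = false →
    ∀ S : Finset ℕ, (∀ v ∈ S, i ≤ v ∧ v < i + fuel) → S.card ≤ k →
    acc ||| orS S ≠ 32767 := by
  intro fuel
  induction fuel with
  | zero =>
    intro i acc k h S hS _
    have hSe : S = ∅ := by
      ext v
      simp only [Finset.notMem_empty, iff_false]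
      intro hv; have := hS v hv; omega
    subst hSe
    simp only [chk, beq_iff_eq] at h
    simpa [orS, Finset.fold_empty, Nat.or_zero] using h
  | succ fuel ih =>
    intro i acc k h S hS hcard
    match k with
    | 0 =>
      have hSe : S = ∅ := Finset.card_eq_zero.mp (Nat.le_zero.mp hcard)
      subst hSe
      simp only [chk, beq_iff_eq] at h
      simpa [orS, Finset.fold_empty, Nat.or_zero] using h
    | k+1 =>
      rw [chk, Bool.or_eq_false_iff] at h
      obtain ⟨h1, h2⟩ := h
      by_cases hi : i ∈ S
      · have key := ih (i+1) (acc ||| mk' i) k h1 (S.erase i)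
          (fun v hv => by
            have hv' := Finset.mem_of_mem_erase hv
            have hne := Finset.ne_of_mem_erase hv
            have := hS v hv'; omega)
          (by
            have := Finset.card_erase_of_mem hi
            omega)
        rw [orS_erase hi, ← Nat.lor_assoc]
        exact key
      · exact ih (i+1) acc (k+1) h2 S
          (fun v hv => by
            have := hS v hv
            rcases Nat.lt_or_ge v (i+1) with h' | h'
            · exact absurd (by omega : v = i) (fun e => hi (e ▸ hv))
            · omega)
          hcard

set_option maxHeartbeats 4000000 in
lemma chk_false : chk 30 0 0 4 = false := by decide

lemma no4 (S : Finset ℕ) (hS : ∀ v ∈ S, v < 30) (hc : S.card ≤ 4) :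
    orS S ≠ 32767 := by
  have h := chk_sound 30 0 0 4 chk_false S
    (fun v hv => ⟨Nat.zero_le _, by simpa using hS v hv⟩) hc
  simpa [Nat.zero_or] using h

lemma mk'_lt (v : ℕ) : mk' v < 32768 := by
  unfold mk'
  by_cases h : v < msL.length
  · rw [List.getD_eq_getElem msL 0 h]
    have hmem : msL[v] ∈ msL := List.getElem_mem h
    have : ∀ x ∈ msL, x < 32768 := by decide
    exact this _ hmem
  · rw [List.getD_eq_default msL 0 (by omega)]
    omega

lemma orS_lt (S : Finset ℕ) : orS S < 32768 := by
  induction S using Finset.induction_on with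
  | empty => simp [orS]
  | insert _ _ h ih =>
    rw [orS, Finset.fold_insert h]
    have h32 : (32768 : ℕ) = 2 ^ 15 := by norm_num
    rw [h32] at ih ⊢
    exact Nat.or_lt_two_pow (h32 ▸ mk'_lt _) ih

lemma bit_of_mem {S : Finset ℕ} {v j : ℕ} (hv : v ∈ S)
    (hb : (mk' v).testBit j = true) : (orS S).testBit j = true := by
  rw [orS_erase hv, Nat.testBit_lor, hb, Bool.true_or]

/-- bit-correctness of the masks: membership in edge `j` forces bit `j`. -/
lemma mask_ok : ∀ v : Fin 30,
    (v ∈ ({0,5,10,15,20,25} : Finset (Fin 30)) → (mk' v.val).testBit 0 = true) ∧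
    (v ∈ ({0,6,11,16,21,26} : Finset (Fin 30)) → (mk' v.val).testBit 1 = true) ∧
    (v ∈ ({1,5,11,17,22,27} : Finset (Fin 30)) → (mk' v.val).testBit 2 = true) ∧
    (v ∈ ({2,7,12,15,21,27} : Finset (Fin 30)) → (mk' v.val).testBit 3 = true) ∧
    (v ∈ ({1,7,10,16,23,28} : Finset (Fin 30)) → (mk' v.val).testBit 4 = true) ∧
    (v ∈ ({3,6,12,17,23,25} : Finset (Fin 30)) → (mk' v.val).testBit 5 = true) ∧
    (v ∈ ({0,7,13,17,24,29} : Finset (Fin 30)) → (mk' v.val).testBit 6 = true) ∧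
    (v ∈ ({4,8,11,15,23,29} : Finset (Fin 30)) → (mk' v.val).testBit 7 = true) ∧
    (v ∈ ({4,6,10,18,24,27} : Finset (Fin 30)) → (mk' v.val).testBit 8 = true) ∧
    (v ∈ ({1,8,13,18,21,25} : Finset (Fin 30)) → (mk' v.val).testBit 9 = true) ∧
    (v ∈ ({0,8,14,19,23,27} : Finset (Fin 30)) → (mk' v.val).testBit 10 = true) ∧
    (v ∈ ({4,9,10,17,21,27} : Finset (Fin 30)) → (mk' v.val).testBit 11 = true) ∧
    (v ∈ ({4,7,11,19,20,25} : Finset (Fin 30)) → (mk' v.val).testBit 12 = true) ∧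
    (v ∈ ({2,8,10,17,21,25} : Finset (Fin 30)) → (mk' v.val).testBit 13 = true) ∧
    (v ∈ ({4,8,10,17,21,28} : Finset (Fin 30)) → (mk' v.val).testBit 14 = true) := by
  decide

lemma cover_or (C : Finset (Fin 30)) (hC : IsCover E6 C) :
    orS (C.image Fin.val) = 32767 := by
  have memS : ∀ v : Fin 30, v ∈ C → v.val ∈ C.image Fin.val :=
    fun v hv => Finset.mem_image_of_mem _ hv
  have hbit : ∀ j : ℕ, j < 15 → (orS (C.image Fin.val)).testBit j = true := by
    intro j hj
    interval_cases j
    · obtain ⟨v, hvC, hve⟩ := hC {0,5,10,15,20,25} (by decide)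
      exact bit_of_mem (memS v hvC) ((mask_ok v).1 hve)
    · obtain ⟨v, hvC, hve⟩ := hC {0,6,11,16,21,26} (by decide)
      exact bit_of_mem (memS v hvC) ((mask_ok v).2.1 hve)
    · obtain ⟨v, hvC, hve⟩ := hC {1,5,11,17,22,27} (by decide)
      exact bit_of_mem (memS v hvC) ((mask_ok v).2.2.1 hve)
    · obtain ⟨v, hvC, hve⟩ := hC {2,7,12,15,21,27} (by decide)
      exact bit_of_mem (memS v hvC) ((mask_ok v).2.2.2.1 hve)
    · obtain ⟨v, hvC, hve⟩ := hC {1,7,10,16,23,28} (by decide)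
      exact bit_of_mem (memS v hvC) ((mask_ok v).2.2.2.2.1 hve)
    · obtain ⟨v, hvC, hve⟩ := hC {3,6,12,17,23,25} (by decide)
      exact bit_of_mem (memS v hvC) ((mask_ok v).2.2.2.2.2.1 hve)
    · obtain ⟨v, hvC, hve⟩ := hC {0,7,13,17,24,29} (by decide)
      exact bit_of_mem (memS v hvC) ((mask_ok v).2.2.2.2.2.2.1 hve)
    · obtain ⟨v, hvC, hve⟩ := hC {4,8,11,15,23,29} (by decide)
      exact bit_of_mem (memS v hvC) ((mask_ok v).2.2.2.2.2.2.2.1 hve)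
    · obtain ⟨v, hvC, hve⟩ := hC {4,6,10,18,24,27} (by decide)
      exact bit_of_mem (memS v hvC) ((mask_ok v).2.2.2.2.2.2.2.2.1 hve)
    · obtain ⟨v, hvC, hve⟩ := hC {1,8,13,18,21,25} (by decide)
      exact bit_of_mem (memS v hvC) ((mask_ok v).2.2.2.2.2.2.2.2.2.1 hve)
    · obtain ⟨v, hvC, hve⟩ := hC {0,8,14,19,23,27} (by decide)
      exact bit_of_mem (memS v hvC) ((mask_ok v).2.2.2.2.2.2.2.2.2.2.1 hve)
    · obtain ⟨v, hvC, hve⟩ := hC {4,9,10,17,21,27} (by decide)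
      exact bit_of_mem (memS v hvC) ((mask_ok v).2.2.2.2.2.2.2.2.2.2.2.1 hve)
    · obtain ⟨v, hvC, hve⟩ := hC {4,7,11,19,20,25} (by decide)
      exact bit_of_mem (memS v hvC) ((mask_ok v).2.2.2.2.2.2.2.2.2.2.2.2.1 hve)
    · obtain ⟨v, hvC, hve⟩ := hC {2,8,10,17,21,25} (by decide)
      exact bit_of_mem (memS v hvC) ((mask_ok v).2.2.2.2.2.2.2.2.2.2.2.2.2.1 hve)
    · obtain ⟨v, hvC, hve⟩ := hC {4,8,10,17,21,28} (by decide)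
      exact bit_of_mem (memS v hvC) ((mask_ok v).2.2.2.2.2.2.2.2.2.2.2.2.2.2 hve)
  apply Nat.eq_of_testBit_eq
  intro j
  by_cases hj : j < 15
  · rw [hbit j hj]
    rw [(by norm_num : (32767:ℕ) = 2^15 - 1), Nat.testBit_two_pow_sub_one]
    simpa using hj
  · have h2 : (32768:ℕ) ≤ 2 ^ j := by
      calc (32768:ℕ) = 2 ^ 15 := by norm_num
        _ ≤ 2 ^ j := Nat.pow_le_pow_right (by norm_num) (by omega)
    rw [Nat.testBit_lt_two_pow (by have := orS_lt (C.image Fin.val); omega),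
      Nat.testBit_lt_two_pow (by omega)]

lemma lowerBound : ∀ C : Finset (Fin 30), IsCover E6 C → 5 ≤ C.card := by
  intro C hC
  by_contra h
  push_neg at h
  have h4 : (C.image Fin.val).card ≤ 4 :=
    le_trans Finset.card_image_le (by omega)
  exact no4 _ (fun v hv => by
      obtain ⟨u, _, rfl⟩ := Finset.mem_image.mp hv
      exact u.isLt) h4 (cover_or C hC)

lemma rpart : Rpartite 6 p6 E6 := by
  unfold Rpartite
  simp only [E6, Finset.forall_mem_insert, Finset.mem_singleton, forall_eq, ExistsUnique]
  refine ⟨?_,?_,?_,?_,?_,?_,?_,?_,?_,?_,?_,?_,?_,?_,?_⟩ <;> decide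

lemma ints : Intersecting E6 := by
  unfold Intersecting
  simp only [E6, Finset.forall_mem_insert, Finset.mem_singleton, forall_eq]
  refine ⟨?_,?_,?_,?_,?_,?_,?_,?_,?_,?_,?_,?_,?_,?_,?_⟩ <;> decide

lemma card15 : E6.card = 15 := by decide

lemma cover5 : IsCover E6 ({4,8,10,17,21} : Finset (Fin 30)) ∧
    ({4,8,10,17,21} : Finset (Fin 30)).card = 5 := by
  constructor
  · unfold IsCover
    simp only [E6, Finset.forall_mem_insert, Finset.mem_singleton, forall_eq]
    refine ⟨?_,?_,?_,?_,?_,?_,?_,?_,?_,?_,?_,?_,?_,?_,?_⟩ <;> decide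
  · decide

theorem stmt16 :
    Rpartite 6 p6 E6 ∧ Intersecting E6 ∧ E6.card = 15 ∧
    (∀ C : Finset (Fin 30), IsCover E6 C → 5 ≤ C.card) ∧
    (∃ C : Finset (Fin 30), IsCover E6 C ∧ C.card = 5) ∧
    f 6 ≤ 15 := by
  refine ⟨rpart, ints, card15, lowerBound, ⟨_, cover5⟩, ?_⟩
  exact Nat.sInf_le ⟨Fin 30, p6, E6, rpart, ints, card15, lowerBound⟩
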